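/- For an odd prime p, work in the ring R = F_p[x]/(x^p − 1) and set ψ(x) = ((1−x)^{p−1} − (1 + x + ... + x^{p−1}))/p, where the division by p is performed on integer coefficients before reduction mod p. Then (ψ(x) + 1)·(1−x)^{p−1} = 0 in R. -/

import Mathlib

open Polynomial

theorem stmt7 (p : ℕ) (hp : p.Prime) (hodd : Odd p) (q : Polynomial ℤ)
    (hq : C (p : ℤ) * q = (1 - X) ^ (p - 1) - ∑ i ∈ Finset.range p, X ^ i) :
    (Ideal.Quotient.mk (Ideal.span {(X : Polynomial (ZMod p)) ^ p - 1}))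
      ((q.map (Int.castRingHom (ZMod p)) + 1) * (1 - X) ^ (p - 1)) = 0 := by
  have hp0 : (p : ℤ) ≠ 0 := by exact_mod_cast hp.pos.ne'
  have hp1 : p - 1 ≠ 0 := by have := hp.two_le; omega
  have hq1 : q.eval 1 = -1 := by
    have h := congrArg (Polynomial.eval 1) hq
    simp [Polynomial.eval_finset_sum, zero_pow (by have := hp.two_le; omega : p - 1 ≠ 0)] at h
    have : (p : ℤ) * q.eval 1 = (p : ℤ) * (-1) := by linarith
    exact mul_left_cancel₀ hp0 this
  set S : Polynomial (ZMod p) := ∑ i ∈ Finset.range p, X ^ i with hSdef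
  set qb : Polynomial (ZMod p) := q.map (Int.castRingHom (ZMod p)) + 1 with hqb
  have hmap : (1 - X : Polynomial (ZMod p)) ^ (p - 1) = S := by
    have h := congrArg (Polynomial.map (Int.castRingHom (ZMod p))) hq
    simp [Polynomial.map_mul, Polynomial.map_pow, Polynomial.map_sub,
      Polynomial.map_sum, ZMod.natCast_self] at h
    exact sub_eq_zero.mp h.symm
  have hqb1 : qb.eval 1 = 0 := by
    rw [hqb]
    simp [Polynomial.eval_one_map, hq1]
  obtain ⟨t, ht⟩ : (X - C 1 : Polynomial (ZMod p)) ∣ qb := dvd_iff_isRoot.mpr hqb1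
  rw [hmap, ht]
  rw [Ideal.Quotient.eq_zero_iff_mem]
  have : (X - C 1) * t * S = t * (S * (X - 1)) := by ring_nf; rw [map_one]; ring
  rw [this, geom_sum_mul]
  exact Ideal.mul_mem_left _ _ (Ideal.subset_span rfl)
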